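/- arXiv:1604.05021 — 12 statements merged into one kernel-verified Lean document; each statement's English description precedes it below -/
import Mathlib

section
/- For every positive integer p, ⌊φ(p + ⌊φp⌋ + 1)⌋ = p, where φ = (√5 − 1)/2. -/
noncomputable def phi : ℝ := (Real.sqrt 5 - 1) / 2

/-- For every positive integer `p`, `⌊φ(p + ⌊φp⌋ + 1)⌋ = p`. -/
theorem floor_phi_eq₁ (p : ℕ) (hp : 1 ≤ p) :
    ⌊phi * ((p : ℝ) + (⌊phi * (p : ℝ)⌋ : ℝ) + 1)⌋ = (p : ℤ) := by
  have h5 : Real.sqrt 5 ^ 2 = 5 := Real.sq_sqrt (by norm_num)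
  have hnn : (0:ℝ) ≤ Real.sqrt 5 := Real.sqrt_nonneg 5
  have hφ2 : phi ^ 2 = 1 - phi := by unfold phi; nlinarith
  have hφpos : 0 < phi := by unfold phi; nlinarith
  have hφlt : phi < 1 := by unfold phi; nlinarith
  have h1 : (⌊phi * (p : ℝ)⌋ : ℝ) ≤ phi * p := Int.floor_le _
  have h2 : phi * p < (⌊phi * (p : ℝ)⌋ : ℝ) + 1 := Int.lt_floor_add_one _
  rw [Int.floor_eq_iff]
  push_cast
  constructor
  · nlinarith
  · nlinarith
end

section
/- For every positive integer p, ⌊φ(2p + ⌊φp⌋ + 1)⌋ = p + ⌊φp⌋, where φ = (√5 − 1)/2. -/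
/-- For every positive integer `p`, `⌊φ(2p + ⌊φp⌋ + 1)⌋ = p + ⌊φp⌋`. -/
theorem floor_phi_eq₂ (p : ℕ) (hp : 1 ≤ p) :
    ⌊phi * (2 * (p : ℝ) + (⌊phi * (p : ℝ)⌋ : ℝ) + 1)⌋ = (p : ℤ) + ⌊phi * (p : ℝ)⌋ := by
  have hs : Real.sqrt 5 ^ 2 = 5 := Real.sq_sqrt (by norm_num)
  have hs2 : (2:ℝ) < Real.sqrt 5 := by
    nlinarith [Real.sqrt_nonneg 5]
  have hs3 : Real.sqrt 5 < 3 := by nlinarith [Real.sqrt_nonneg 5]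
  set q := ⌊phi * (p : ℝ)⌋ with hq
  have h1 : (q : ℝ) ≤ phi * p := Int.floor_le _
  have h2 : phi * (p : ℝ) < q + 1 := Int.lt_floor_add_one _
  have hphi : phi = (Real.sqrt 5 - 1) / 2 := rfl
  rw [Int.floor_eq_iff]
  rw [hphi] at h1 h2 ⊢
  constructor
  · push_cast
    nlinarith [mul_nonneg (sub_nonneg.2 h1) (by nlinarith : (0:ℝ) ≤ 1 - (Real.sqrt 5 - 1) / 2)]
  · push_cast
    nlinarith [mul_pos (by linarith : (0:ℝ) < q + 1 - (Real.sqrt 5 - 1) / 2 * p) (by nlinarith : (0:ℝ) < 1 - (Real.sqrt 5 - 1) / 2)]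
end

section
/- For every positive integer p, ⌊φ(p + ⌊φp⌋)⌋ = p − 1, where φ = (√5 − 1)/2. -/
/-- For every positive integer `p`, `⌊φ(p + ⌊φp⌋)⌋ = p - 1`. -/
theorem floor_phi_eq₃ (p : ℕ) (hp : 1 ≤ p) :
    ⌊phi * ((p : ℝ) + (⌊phi * (p : ℝ)⌋ : ℝ))⌋ = (p : ℤ) - 1 := by
  have h5 : Real.sqrt 5 ^ 2 = 5 := Real.sq_sqrt (by norm_num)
  have hs : (2:ℝ) < Real.sqrt 5 := by nlinarith [Real.sqrt_nonneg 5]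
  have hs3 : Real.sqrt 5 < 3 := by nlinarith [Real.sqrt_nonneg 5]
  have hphi_pos : 0 < phi := by unfold phi; linarith
  have hphi_lt : phi < 1 := by unfold phi; linarith
  have hsq : phi ^ 2 = 1 - phi := by unfold phi; nlinarith
  set x : ℝ := phi * (p : ℝ) with hx
  set n : ℤ := ⌊x⌋ with hn
  have hirr5 : Irrational (Real.sqrt 5) := by
    simpa using (Nat.prime_five).irrational_sqrt
  have hirrphi : Irrational phi := by
    unfold phi
    have h := (hirr5.sub_ratCast (q := 1)).div_ratCast (q := 2) (by norm_num)
    simpa using h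
  have hirrx : Irrational x := by
    rw [hx, mul_comm]
    exact hirrphi.natCast_mul (by omega)
  have hlb : (n : ℝ) ≤ x := Int.floor_le x
  have hub : x < n + 1 := Int.lt_floor_add_one x
  have hne : (n : ℝ) ≠ x := fun h => hirrx.ne_int n h.symm
  have hlt : (n : ℝ) < x := lt_of_le_of_ne hlb hne
  have hp1 : (1:ℝ) ≤ (p:ℝ) := by exact_mod_cast hp
  rw [Int.floor_eq_iff]
  push_cast
  constructor
  · nlinarith [mul_lt_mul_of_pos_left (sub_lt_iff_lt_add.mpr hub) hphi_pos]
  · nlinarith [mul_pos hphi_pos (sub_pos.mpr hlt)]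
end

section
/- For every positive integer p, ⌊φ(2p + ⌊φp⌋)⌋ = p + ⌊φp⌋, where φ = (√5 − 1)/2. -/
/-- For every positive integer `p`, `⌊φ(2p + ⌊φp⌋)⌋ = p + ⌊φp⌋`. -/
theorem floor_phi_eq₄ (p : ℕ) (hp : 1 ≤ p) :
    ⌊phi * (2 * (p : ℝ) + (⌊phi * (p : ℝ)⌋ : ℝ))⌋ = (p : ℤ) + ⌊phi * (p : ℝ)⌋ := by
  have hs : Real.sqrt 5 ^ 2 = 5 := Real.sq_sqrt (by norm_num)
  have hs1 : 1 < Real.sqrt 5 := by nlinarith [Real.sqrt_nonneg 5]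
  have hphi : phi ^ 2 = 1 - phi := by unfold phi; nlinarith
  have hphi_pos : 0 < phi := by unfold phi; linarith
  set n := ⌊phi * (p : ℝ)⌋ with hn
  have h1 : (n : ℝ) ≤ phi * p := Int.floor_le _
  have h2 : phi * p - 1 < n := Int.sub_one_lt_floor _
  rw [Int.floor_eq_iff]
  constructor
  · push_cast
    nlinarith [mul_nonneg (sq_nonneg phi) (sub_nonneg.2 h1)]
  · push_cast
    nlinarith [mul_nonneg (sq_nonneg phi) (le_of_lt (by linarith : (0:ℝ) < (n:ℝ) - phi*p + 1))]
end

section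
/- If A is the sequence satisfying A(f_m − 2) = ∑_{n=1}^{m−1} C(n) where C(n) = ((n+1)/5) f_{n+1} + ((n−2)/5) f_{n−1}, then A(f_m − 2) = ((m−3)/5) f_{m+2} + ((m−1)/5) f_m + 2 for all m ≥ 2. -/
/-- Fibonacci numbers shifted: `fibF (m+2) = f_m` where `f_{-2}=0`, `f_{-1}=1`,
`f_m = f_{m-1} + f_{m-2}`. -/
def fibF : ℕ → ℕ
  | 0 => 0
  | 1 => 1
  | n + 2 => fibF (n + 1) + fibF n

/-- For `m ≥ 2`,
`∑_{n=1}^{m-1} [((n+1)/5) f_{n+1} + ((n-2)/5) f_{n-1}] = ((m-3)/5) f_{m+2} + ((m-1)/5) f_m + 2`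
(with `f_i = fibF (i+2)`). -/
theorem sum_C_closed_form (m : ℕ) (hm : 2 ≤ m) :
    (∑ n ∈ Finset.Icc 1 (m - 1),
        ((((n : ℚ) + 1) / 5) * (fibF (n + 3) : ℚ) +
          (((n : ℚ) - 2) / 5) * (fibF (n + 1) : ℚ))) =
      (((m : ℚ) - 3) / 5) * (fibF (m + 4) : ℚ) +
        (((m : ℚ) - 1) / 5) * (fibF (m + 2) : ℚ) + 2 := by
  induction m, hm using Nat.le_induction with
  | base => simp [fibF]; norm_num
  | succ m hm ih =>
    have h1 : m + 1 - 1 = (m - 1) + 1 := by omega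
    rw [h1, Finset.sum_Icc_succ_top (by omega : 1 ≤ m - 1 + 1)]
    have h2 : m - 1 + 1 = m := by omega
    rw [h2, ih]
    have e4 : fibF (m + 1 + 4) = fibF (m + 4) + fibF (m + 3) := rfl
    have e3 : fibF (m + 4) = fibF (m + 3) + fibF (m + 2) := rfl
    have e2 : fibF (m + 1 + 2) = fibF (m + 2) + fibF (m + 1) := rfl
    have e1 : fibF (m + 3) = fibF (m + 2) + fibF (m + 1) := rfl
    rw [e4, e3, e2]
    push_cast
    ring
end

section
/- A prefix F[1,n] of the Fibonacci word is a palindrome if and only if n = f_m − 2 for some m ≥ 2, where f denotes Fibonacci numbers with f_{−2}=0, f_{−1}=1 (so f_2 = 5, f_3 = 8, ...). -/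
def fibSub : Fin 2 → List (Fin 2) := fun x => if x = 0 then [0, 1] else [0]

def fibList : ℕ → List (Fin 2)
  | 0 => [0]
  | n + 1 => (fibList n).flatMap fibSub

def fibWord (i : ℕ) : Fin 2 := (fibList (i + 1)).getD i 0

def fibPrefix (n : ℕ) : List (Fin 2) := (List.range n).map fibWord

-- basics
theorem fibF_add_two (n : ℕ) : fibF (n + 2) = fibF (n + 1) + fibF n := rfl

theorem fibF_pos : ∀ k, 1 ≤ fibF (k + 1)
  | 0 => le_refl _
  | 1 => le_refl _
  | (k+2) => by have := fibF_pos k; rw [fibF_add_two]; omega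

theorem fibF_lt (m : ℕ) : fibF (m + 2) < fibF (m + 3) := by
  have h := fibF_pos m
  have e : fibF (m + 3) = fibF (m + 2) + fibF (m + 1) := rfl
  omega

theorem fibF_mono : ∀ a b, 2 ≤ a → a < b → fibF a < fibF b := by
  intro a b ha hab
  induction b with
  | zero => omega
  | succ b ih =>
    rcases Nat.lt_or_ge a b with h | h
    · have h1 := ih h
      obtain ⟨c, rfl⟩ : ∃ c, b = c + 2 := ⟨b - 2, by omega⟩
      have h2 := fibF_lt c
      have e : c + 2 + 1 = c + 3 := by omega
      rw [e]
      omega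
    · have : a = b := by omega
      subst this
      obtain ⟨c, rfl⟩ : ∃ c, a = c + 2 := ⟨a - 2, by omega⟩
      exact fibF_lt c

theorem fibList_add_two (k : ℕ) : fibList (k + 2) = fibList (k + 1) ++ fibList k := by
  induction k with
  | zero => decide
  | succ k ih =>
    show (fibList (k+2)).flatMap fibSub = fibList (k + 2) ++ fibList (k + 1)
    conv_lhs => rw [ih]
    rw [List.flatMap_append]
    rfl

theorem length_fibList : ∀ m, (fibList m).length = fibF (m + 2) := by
  intro m
  induction m using Nat.twoStepInduction with
  | zero => decide
  | one => decide
  | more m ih1 ih2 =>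
    rw [fibList_add_two, List.length_append, ih1, ih2]
    show _ = fibF (m + 2 + 2)
    rw [fibF_add_two (m + 2)]

theorem count_zero_fibList : ∀ m, (fibList m).count 0 = fibF (m + 1) := by
  intro m
  induction m using Nat.twoStepInduction with
  | zero => decide
  | one => decide
  | more m ih1 ih2 =>
    rw [fibList_add_two, List.count_append, ih1, ih2]
    show _ = fibF (m + 1 + 2)
    rw [fibF_add_two (m + 1)]

def fibDelta (m : ℕ) : List (Fin 2) := if m % 2 = 1 then [0, 1] else [1, 0]

theorem fibList_delta : ∀ m, 1 ≤ m → ∃ w, fibList m = w ++ fibDelta m := by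
  intro m
  induction m using Nat.twoStepInduction with
  | zero => omega
  | one => intro _; exact ⟨[], by decide⟩
  | more m ih1 ih2 =>
    intro _
    rcases Nat.eq_zero_or_pos m with rfl | hm
    · exact ⟨[0], by decide⟩
    · obtain ⟨w, hw⟩ := ih1 hm
      refine ⟨fibList (m+1) ++ w, ?_⟩
      rw [fibList_add_two, hw, fibDelta, fibDelta]
      have : (m + 2) % 2 = m % 2 := by omega
      rw [this, List.append_assoc]

theorem fibList_prefix (m : ℕ) : fibList m <+: fibList (m + 1) := by
  cases m with
  | zero => decide
  | succ m => rw [fibList_add_two]; exact List.prefix_append _ _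

theorem fibList_prefix_le {m m' : ℕ} (h : m ≤ m') : fibList m <+: fibList m' := by
  induction m' with
  | zero => rw [Nat.le_zero] at h; subst h; exact List.prefix_refl _
  | succ m' ih =>
    rcases Nat.lt_or_ge m (m' + 1) with h' | h'
    · exact (ih (by omega)).trans (fibList_prefix m')
    · have : m = m' + 1 := by omega
      subst this; exact List.prefix_refl _

theorem fibF_ge : ∀ m, m + 1 ≤ fibF (m + 2) := by
  intro m
  induction m using Nat.twoStepInduction with
  | zero => decide
  | one => decide
  | more m ih1 ih2 =>
    have h1 := fibF_pos (m + 1)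
    have e : fibF (m + 2 + 2) = fibF (m + 2 + 1) + fibF (m + 2) := fibF_add_two _
    have e2 : m + 2 + 1 = m + 1 + 2 := by omega
    rw [e2] at e
    omega

theorem lt_length_fibList (m : ℕ) : m < (fibList m).length := by
  rw [length_fibList]; have := fibF_ge m; omega

theorem fibWord_getD {m i : ℕ} (h : i < (fibList m).length) :
    fibWord i = (fibList m).getD i 0 := by
  have hi : i < (fibList (i + 1)).length := Nat.lt_of_le_of_lt (Nat.le_succ i) (lt_length_fibList (i+1))
  rcases Nat.le_total m (i + 1) with hm | hm
  · have hp := fibList_prefix_le hm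
    rw [fibWord, List.getD_eq_getElem _ _ hi, List.getD_eq_getElem _ _ h, hp.getElem h]
  · have hp := fibList_prefix_le hm
    rw [fibWord, List.getD_eq_getElem _ _ hi, List.getD_eq_getElem _ _ h, hp.getElem hi]

@[simp] theorem length_fibPrefix (n : ℕ) : (fibPrefix n).length = n := by
  simp [fibPrefix]

theorem fibPrefix_getElem {n i : ℕ} (h : i < n) :
    (fibPrefix n)[i]'(by simpa using h) = fibWord i := by
  simp [fibPrefix]

theorem fibPrefix_eq_take {n m : ℕ} (h : n ≤ (fibList m).length) :
    fibPrefix n = (fibList m).take n := by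
  apply List.ext_getElem
  · simp [Nat.min_eq_left h]
  · intro i h1 h2
    have hin : i < n := by simpa using h1
    have hi : i < (fibList m).length := lt_of_lt_of_le hin h
    rw [List.getElem_take, fibPrefix_getElem hin, fibWord_getD (m := m) hi,
      List.getD_eq_getElem _ _ hi]

theorem fibPrefix_length (m : ℕ) : fibPrefix ((fibList m).length) = fibList m := by
  rw [fibPrefix_eq_take (le_refl _), List.take_length]

def sF (k : ℕ) : ℕ := ((fibPrefix k).flatMap fibSub).length

theorem flatMap_fibPrefix (n : ℕ) : (fibPrefix n).flatMap fibSub = fibPrefix (sF n) := by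
  have hn : n ≤ (fibList n).length := le_of_lt (lt_length_fibList n)
  have h1 : fibPrefix n = (fibList n).take n := fibPrefix_eq_take hn
  have h2 : (fibPrefix n).flatMap fibSub <+: fibList (n + 1) := by
    rw [h1]
    show _ <+: (fibList n).flatMap fibSub
    conv_rhs => rw [← List.take_append_drop n (fibList n)]
    rw [List.flatMap_append]
    exact List.prefix_append _ _
  have h3 : sF n ≤ (fibList (n+1)).length := by
    have := h2.length_le; exact this
  rw [List.prefix_iff_eq_take.mp h2,
    show ((fibPrefix n).flatMap fibSub).length = sF n from rfl]
  exact (fibPrefix_eq_take h3).symm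

theorem length_flatMap_fibSub : ∀ l : List (Fin 2),
    (l.flatMap fibSub).length = l.length + l.count 0 := by
  intro l
  induction l with
  | nil => rfl
  | cons x t ih =>
    rw [List.flatMap_cons, List.length_append, ih, List.count_cons]
    by_cases hx : x = 0
    · subst hx; simp [fibSub]; omega
    · simp [fibSub, hx]
      omega

theorem fibPrefix_succ (k : ℕ) : fibPrefix (k + 1) = fibPrefix k ++ [fibWord k] := by
  rw [fibPrefix, List.range_succ, List.map_append]; rfl

theorem sF_succ (k : ℕ) : sF (k + 1) = sF k + (if fibWord k = 0 then 2 else 1) := by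
  rw [sF, fibPrefix_succ, List.flatMap_append, List.length_append]
  congr 1
  by_cases h : fibWord k = 0 <;> simp [fibSub, h]

theorem sF_strictMono : StrictMono sF := by
  apply strictMono_nat_of_lt_succ
  intro k
  rw [sF_succ]
  split <;> omega

theorem sF_one : sF 1 = 2 := rfl

theorem fibWord_zero : fibWord 0 = 0 := rfl

theorem fibPrefix_mono {a b : ℕ} (h : a ≤ b) : fibPrefix a <+: fibPrefix b := by
  apply List.IsPrefix.map
  rw [List.prefix_iff_eq_take, List.take_range, List.length_range, Nat.min_eq_left h]

theorem fibWord_sF (k : ℕ) : fibWord (sF k) = 0 := by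
  have h1 : fibPrefix (sF (k + 1)) = fibPrefix (sF k) ++ fibSub (fibWord k) := by
    rw [← flatMap_fibPrefix, fibPrefix_succ, List.flatMap_append, flatMap_fibPrefix]
    simp
  have h2 : fibPrefix (sF k) ++ [fibWord (sF k)] <+: fibPrefix (sF k) ++ fibSub (fibWord k) := by
    rw [← fibPrefix_succ, ← h1]
    exact fibPrefix_mono (sF_strictMono (Nat.lt_succ_self k))
  rw [List.prefix_append_right_inj] at h2
  by_cases h : fibWord k = 0 <;> simp [fibSub, h] at h2 <;> exact h2

-- palindrome combinatorics
def fibSubR : Fin 2 → List (Fin 2) := fun x => if x = 0 then [1, 0] else [0]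

theorem fibSub_conj : ∀ p : List (Fin 2),
    p.flatMap fibSub ++ [0] = 0 :: p.flatMap fibSubR := by
  intro p
  induction p with
  | nil => rfl
  | cons x t ih =>
    rw [List.flatMap_cons, List.flatMap_cons, List.append_assoc, ih]
    by_cases hx : x = 0 <;> simp [fibSub, fibSubR, hx]

theorem fibSubR_reverse : ∀ p : List (Fin 2),
    (p.flatMap fibSubR).reverse = p.reverse.flatMap fibSub := by
  intro p
  induction p with
  | nil => rfl
  | cons x t ih =>
    rw [List.flatMap_cons, List.reverse_append, ih, List.reverse_cons, List.flatMap_append]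
    congr 1
    by_cases hx : x = 0 <;> simp [fibSub, fibSubR, hx]

theorem flatMap_fibSub_inj : ∀ l l' : List (Fin 2), l.length = l'.length →
    l.flatMap fibSub = l'.flatMap fibSub → l = l' := by
  intro l
  induction l with
  | nil =>
    intro l' hl _
    cases l' with
    | nil => rfl
    | cons y t' => simp at hl
  | cons x t ih =>
    intro l' hl he
    cases l' with
    | nil => simp at hl
    | cons y t' =>
      have hl' : t.length = t'.length := by simpa using hl
      rw [List.flatMap_cons, List.flatMap_cons] at he
      by_cases hx : x = 0 <;> by_cases hy : y = 0
      · subst hx; subst hy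
        simp only [fibSub, if_pos rfl] at he
        have := List.append_cancel_left he
        rw [ih t' hl' (by simpa using he)]
      · exfalso
        have hy1 : y = 1 := by omega
        subst hx; subst hy1
        simp only [fibSub] at he
        norm_num at he
        -- he : 1 :: t.flatMap fibSub = t'.flatMap fibSub
        cases t' with
        | nil =>
          rw [List.flatMap_nil] at he
          exact List.cons_ne_nil _ _ he
        | cons z r =>
          rw [List.flatMap_cons] at he
          by_cases hz : z = 0 <;> simp [fibSub, hz] at he
      · exfalso
        have hx1 : x = 1 := by omega
        subst hy; subst hx1
        simp only [fibSub] at he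
        norm_num at he
        cases t with
        | nil =>
          rw [List.flatMap_nil] at he
          exact List.cons_ne_nil _ _ he.symm
        | cons z r =>
          rw [List.flatMap_cons] at he
          by_cases hz : z = 0 <;> simp [fibSub, hz] at he
      · have hx1 : x = 1 := by omega
        have hy1 : y = 1 := by omega
        subst hx1; subst hy1
        simp only [fibSub] at he
        norm_num at he
        rw [ih t' hl' he]

theorem pal_flatMap_iff (p : List (Fin 2)) :
    (p.flatMap fibSub ++ [0]).Palindrome ↔ p.Palindrome := by
  have hrev : (p.flatMap fibSub ++ [0]).reverse = p.reverse.flatMap fibSub ++ [0] := by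
    rw [fibSub_conj, List.reverse_cons, fibSubR_reverse]
  constructor
  · intro h
    have h1 := h.reverse_eq
    rw [hrev] at h1
    have h2 : p.reverse.flatMap fibSub = p.flatMap fibSub := List.append_cancel_right h1
    have h3 : p.reverse = p := flatMap_fibSub_inj _ _ (by simp) h2
    exact List.Palindrome.of_reverse_eq h3
  · intro h
    apply List.Palindrome.of_reverse_eq
    rw [hrev, h.reverse_eq]

-- arithmetic
def Good (n : ℕ) : Prop := ∃ m : ℕ, 2 ≤ m ∧ n = fibF (m + 2) - 2

theorem count_zero_fibDelta (m : ℕ) : (fibDelta m).count 0 = 1 := by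
  rw [fibDelta]; split <;> decide

theorem sF_good {m : ℕ} (hm : 2 ≤ m) : sF (fibF (m + 2) - 2) + 3 = fibF (m + 3) := by
  have hL : (fibList m).length = fibF (m + 2) := length_fibList m
  have hge : m + 1 ≤ fibF (m + 2) := fibF_ge m
  obtain ⟨w, hw⟩ := fibList_delta m (by omega)
  have hwl : w.length = fibF (m + 2) - 2 := by
    have := congrArg List.length hw
    rw [hL] at this
    rw [List.length_append] at this
    have hd : (fibDelta m).length = 2 := by rw [fibDelta]; split <;> rfl
    omega
  have hpre : fibPrefix (fibF (m + 2) - 2) = w := by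
    rw [fibPrefix_eq_take (m := m) (by omega), hw, ← hwl, List.take_left]
  have hcw : w.count 0 = fibF (m + 1) - 1 := by
    have h1 : (fibList m).count 0 = fibF (m + 1) := count_zero_fibList m
    rw [hw, List.count_append, count_zero_fibDelta] at h1
    omega
  have hs : sF (fibF (m + 2) - 2) = w.length + w.count 0 := by
    rw [sF, hpre, length_flatMap_fibSub]
  have hp1 : 1 ≤ fibF (m + 1) := fibF_pos m
  have e3 : fibF (m + 3) = fibF (m + 2) + fibF (m + 1) := fibF_add_two (m + 1)
  omega

theorem sF_two : sF 2 = 3 := rfl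

theorem sF_ge_two {k : ℕ} (hk : 1 ≤ k) : 2 ≤ sF k := by
  have : sF 1 ≤ sF k := sF_strictMono.monotone hk
  rw [sF_one] at this; omega

theorem good_large {n m : ℕ} (hm : 2 ≤ m) (hn : n = fibF (m + 2) - 2) (h2 : 2 ≤ n) :
    3 ≤ m := by
  by_contra h
  have : m = 2 := by omega
  subst this
  have : fibF (2 + 2) = 3 := rfl
  omega

/-- If `n = sF k` and `n` is good then `k = fibF (j+2) - 1` with `fibWord (k-1) = 1`. -/
theorem good_sF_eq {n k : ℕ} (hk : 1 ≤ k) (hn : n = sF k) (hg : Good n) :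
    ∃ j, 2 ≤ j ∧ k = fibF (j + 2) - 1 ∧ fibWord (k - 1) = 1 ∧ n + 2 = fibF (j + 3) := by
  obtain ⟨m, hm, hnm⟩ := hg
  have h2 : 2 ≤ n := hn ▸ sF_ge_two hk
  have hm3 : 3 ≤ m := good_large hm hnm h2
  obtain ⟨j, rfl⟩ : ∃ j, m = j + 1 := ⟨m - 1, by omega⟩
  have hj : 2 ≤ j := by omega
  have hge : j + 2 ≤ fibF (j + 3) := fibF_ge (j + 1)
  have hge' : j + 1 ≤ fibF (j + 2) := fibF_ge j
  have e1 : sF (fibF (j + 2) - 2) + 3 = fibF (j + 3) := sF_good hj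
  have hn3 : n = fibF (j + 3) - 2 := by
    have : j + 1 + 2 = j + 3 := by omega
    rwa [this] at hnm
  have hlt : sF (fibF (j + 2) - 2) < sF k := by omega
  have hklt : fibF (j + 2) - 2 < k := sF_strictMono.lt_iff_lt.mp hlt
  have hstep : sF (fibF (j + 2) - 2 + 1) =
      sF (fibF (j + 2) - 2) + (if fibWord (fibF (j + 2) - 2) = 0 then 2 else 1) :=
    sF_succ _
  by_cases h0 : fibWord (fibF (j + 2) - 2) = 0
  · exfalso
    rw [if_pos h0] at hstep
    -- sF (fibF (j+2) - 1) = n + 1 > n = sF k , but k ≥ fibF (j+2) - 1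
    have hle : sF (fibF (j + 2) - 2 + 1) ≤ sF k := sF_strictMono.monotone (by omega)
    omega
  · rw [if_neg h0] at hstep
    have heq : sF (fibF (j + 2) - 2 + 1) = sF k := by omega
    have hkeq : fibF (j + 2) - 2 + 1 = k := sF_strictMono.injective heq
    have h1 : fibWord (k - 1) = 1 := by
      have : k - 1 = fibF (j + 2) - 2 := by omega
      rw [this]
      have : fibWord (fibF (j + 2) - 2) = 1 := by omega
      exact this
    exact ⟨j, hj, by omega, h1, by omega⟩

theorem arith_A1 {n k : ℕ} (hk : 1 ≤ k) (hn : n = sF k + 1) : (Good n ↔ Good k) := by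
  constructor
  · rintro ⟨m, hm, hnm⟩
    have h2 : 2 ≤ n := by have := sF_ge_two hk; omega
    have h3 : 3 ≤ n := by have := sF_ge_two hk; omega
    have hm3 : 3 ≤ m := by
      by_contra h
      have : m = 2 := by omega
      subst this
      have : fibF (2 + 2) = 3 := rfl
      omega
    obtain ⟨j, rfl⟩ : ∃ j, m = j + 1 := ⟨m - 1, by omega⟩
    have hj : 2 ≤ j := by omega
    have e1 : sF (fibF (j + 2) - 2) + 3 = fibF (j + 3) := sF_good hj
    have hge : j + 2 ≤ fibF (j + 3) := fibF_ge (j + 1)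
    have hn3 : n = fibF (j + 3) - 2 := by
      have e : j + 1 + 2 = j + 3 := by omega
      rwa [e] at hnm
    have : sF (fibF (j + 2) - 2) = sF k := by omega
    have hkeq := sF_strictMono.injective this
    exact ⟨j, hj, hkeq.symm⟩
  · rintro ⟨m, hm, hkm⟩
    refine ⟨m + 1, by omega, ?_⟩
    have e1 : sF (fibF (m + 2) - 2) + 3 = fibF (m + 3) := sF_good hm
    rw [show m + 1 + 2 = m + 3 from by omega, ← hkm] at *
    rw [show m + 1 + 2 = m + 3 from by omega]
    omega

theorem arith_A2 {n k : ℕ} (hk : 2 ≤ k) (hn : n = sF k) (hw : fibWord (k - 1) = 1) :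
    (Good n ↔ Good (k - 1)) := by
  constructor
  · intro hg
    obtain ⟨j, hj, hkj, _, _⟩ := good_sF_eq (by omega) hn hg
    have hge' : j + 1 ≤ fibF (j + 2) := fibF_ge j
    exact ⟨j, hj, by omega⟩
  · rintro ⟨m, hm, hkm⟩
    have hge' : m + 1 ≤ fibF (m + 2) := fibF_ge m
    have e1 : sF (fibF (m + 2) - 2) + 3 = fibF (m + 3) := sF_good hm
    have hkeq : k = fibF (m + 2) - 2 + 1 := by omega
    have hstep : sF (fibF (m + 2) - 2 + 1) =
        sF (fibF (m + 2) - 2) + (if fibWord (fibF (m + 2) - 2) = 0 then 2 else 1) :=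
      sF_succ _
    have hw' : fibWord (fibF (m + 2) - 2) = 1 := by
      have e : k - 1 = fibF (m + 2) - 2 := by omega
      rwa [e] at hw
    rw [if_neg (by rw [hw']; decide)] at hstep
    refine ⟨m + 1, by omega, ?_⟩
    have e : m + 1 + 2 = m + 3 := by omega
    rw [e]
    rw [← hkeq] at hstep
    omega

theorem arith_A3 {n k : ℕ} (hk : 1 ≤ k) (hn : n = sF k) (hw : fibWord (k - 1) = 0) :
    ¬ Good n := by
  intro hg
  obtain ⟨j, _, _, hw1, _⟩ := good_sF_eq hk hn hg
  rw [hw] at hw1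
  exact absurd hw1 (by decide)

theorem decomp : ∀ n, 2 ≤ n → ∃ k, 1 ≤ k ∧ k < n ∧ (n = sF k ∨ n = sF k + 1) := by
  intro n
  induction n with
  | zero => omega
  | succ n ih =>
    intro hn
    rcases Nat.lt_or_ge n 2 with h2 | h2
    · have : n = 1 := by omega
      subst this
      exact ⟨1, le_refl _, by omega, Or.inl (by rw [sF_one])⟩
    · obtain ⟨k, hk1, hk2, hcase⟩ := ih h2
      rcases hcase with h | h
      · exact ⟨k, hk1, by omega, Or.inr (by omega)⟩
      · have hstep := sF_succ k
        by_cases h0 : fibWord k = 0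
        · rw [if_pos h0] at hstep
          exact ⟨k + 1, by omega, by omega, Or.inl (by omega)⟩
        · rw [if_neg h0] at hstep
          exact ⟨k + 1, by omega, by omega, Or.inr (by omega)⟩

theorem fibPal_iff_good : ∀ n, 1 ≤ n → ((fibPrefix n).Palindrome ↔ Good n) := by
  intro n
  induction n using Nat.strong_induction_on with
  | _ n ih =>
  intro hn
  rcases Nat.lt_or_ge n 2 with h2 | h2
  · have hn1 : n = 1 := by omega
    subst hn1
    constructor
    · intro _; exact ⟨2, le_refl _, rfl⟩
    · intro _
      exact List.Palindrome.of_reverse_eq rfl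
  · obtain ⟨k, hk1, hkn, hcase⟩ := decomp n h2
    rcases hcase with hcs | hca
    · -- n = sF k
      obtain ⟨j, rfl⟩ : ∃ j, k = j + 1 := ⟨k - 1, by omega⟩
      have hfp : fibPrefix n = (fibPrefix j).flatMap fibSub ++ fibSub (fibWord j) := by
        rw [hcs, ← flatMap_fibPrefix, fibPrefix_succ, List.flatMap_append]
        simp
      by_cases h0 : fibWord j = 0
      · rw [h0] at hfp
        have hfp2 : fibPrefix n = (fibPrefix j).flatMap fibSub ++ [0, 1] := by
          rw [hfp]; rfl
        constructor
        · intro hpal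
          exfalso
          obtain ⟨t, ht⟩ := (fibPrefix_mono hn : fibPrefix 1 <+: fibPrefix n)
          have ht0 : fibPrefix n = 0 :: t := by rw [← ht]; rfl
          have hA : (fibPrefix n).reverse = 0 :: t := by rw [hpal.reverse_eq, ht0]
          have hB : (fibPrefix n).reverse =
              1 :: (0 :: ((fibPrefix j).flatMap fibSub).reverse) := by
            rw [hfp2]; simp
          rw [hA] at hB
          injection hB with h _
          exact absurd h (by decide)
        · intro hg
          exact absurd hg (arith_A3 hk1 hcs (by simpa using h0))
      · have h1 : fibWord j = 1 := by omega
        rw [h1] at hfp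
        have hfp2 : fibPrefix n = (fibPrefix j).flatMap fibSub ++ [0] := by
          rw [hfp]; rfl
        have hj1 : 1 ≤ j := by
          by_contra h
          have : j = 0 := by omega
          subst this
          rw [fibWord_zero] at h1
          exact absurd h1 (by decide)
        rw [hfp2, pal_flatMap_iff, ih j (by omega) hj1]
        exact (arith_A2 (k := j + 1) (by omega) hcs (by simpa using h1)).symm
    · -- n = sF k + 1
      have hfp : fibPrefix n = (fibPrefix k).flatMap fibSub ++ [0] := by
        rw [hca, flatMap_fibPrefix, fibPrefix_succ, fibWord_sF]
      rw [hfp, pal_flatMap_iff, ih k hkn hk1]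
      exact (arith_A1 hk1 hca).symm

/-- `F[1,n]` is a palindrome iff `n = f_m - 2` for some `m ≥ 2` (with `f_m = fibF (m+2)`). -/
theorem fibPrefix_palindrome_iff (n : ℕ) (hn : 1 ≤ n) :
    (fibPrefix n).Palindrome ↔ ∃ m : ℕ, 2 ≤ m ∧ n = fibF (m + 2) - 2 := by
  exact fibPal_iff_good n hn
end

section
/- Define the sequence a(n) by a(1)=1, a(2)=1, a(3)=2, and for m ≥ 3 and 0 ≤ j ≤ f_{m−1}−1, a(f_m − 1 + j) = a(f_{m−2} − 1 + j) + 1. Then a(f_m − 1) = ⌊(m+1)/2⌋ and a(f_m) = ⌊(m+2)/2⌋ for all m ≥ 2, hence a(f_m − 1) + a(f_m) = m + 1. -/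
/-- If `a 1 = 1`, `a 2 = 1`, `a 3 = 2`, and for `m ≥ 3` and `0 ≤ j ≤ f_{m-1} - 1`,
`a (f_m - 1 + j) = a (f_{m-2} - 1 + j) + 1` (with `f_i = fibF (i+2)`),
then `a (f_m - 1) = ⌊(m+1)/2⌋`, `a (f_m) = ⌊(m+2)/2⌋`, and
`a (f_m - 1) + a (f_m) = m + 1` for all `m ≥ 2`. -/
theorem a_at_fib (a : ℕ → ℕ) (h1 : a 1 = 1) (h2 : a 2 = 1) (h3 : a 3 = 2)
    (hrec : ∀ m : ℕ, 3 ≤ m → ∀ j : ℕ, j < fibF (m + 1) →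
      a (fibF (m + 2) - 1 + j) = a (fibF m - 1 + j) + 1) :
    ∀ m : ℕ, 2 ≤ m →
      a (fibF (m + 2) - 1) = (m + 1) / 2 ∧
      a (fibF (m + 2)) = (m + 2) / 2 ∧
      a (fibF (m + 2) - 1) + a (fibF (m + 2)) = m + 1 := by
  have hpos : ∀ n, 1 ≤ n → 1 ≤ fibF n := by
    intro n hn
    induction n using Nat.strong_induction_on with
    | _ n ih =>
      match n, hn with
      | 1, _ => simp [fibF]
      | 2, _ => simp [fibF]
      | (k+3), _ =>
        have h := ih (k+2) (by omega) (by omega)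
        have : fibF (k+3) = fibF (k+2) + fibF (k+1) := rfl
        omega
  have hge2 : ∀ n, 3 ≤ n → 2 ≤ fibF n := by
    intro n hn
    match n, hn with
    | (k+3), _ =>
      have h1 := hpos (k+2) (by omega)
      have h2 := hpos (k+1) (by omega)
      have : fibF (k+3) = fibF (k+2) + fibF (k+1) := rfl
      omega
  intro m hm
  induction m using Nat.strong_induction_on with
  | _ m ih =>
    match m, hm with
    | 2, _ =>
      have : fibF 4 = 3 := by simp [fibF]
      rw [this]
      norm_num [h2, h3]
    | 3, _ =>
      have h4 : fibF 4 = 3 := by simp [fibF]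
      have h5 : fibF 5 = 5 := by simp [fibF]
      have e0 := hrec 3 (by norm_num) 0 (by rw [h4]; norm_num)
      have e1 := hrec 3 (by norm_num) 1 (by rw [h4]; norm_num)
      simp [fibF] at e0 e1 ⊢
      norm_num [e0, e1, h1, h2]
    | (k+4), _ =>
      obtain ⟨ia, ib, ic⟩ := ih (k+2) (by omega) (by omega)
      have hf2 : 2 ≤ fibF (k+5) := hge2 _ (by omega)
      have hf1 : 1 ≤ fibF (k+4) := hpos _ (by omega)
      have hf1' : 1 ≤ fibF (k+6) := hpos _ (by omega)
      have hf2' : fibF (k+4+1) = fibF (k+5) := by norm_num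
      have e0 := hrec (k+4) (by omega) 0 (by rw [hf2']; omega)
      have e1 := hrec (k+4) (by omega) 1 (by rw [hf2']; omega)
      have e1' : a (fibF (k+6)) = a (fibF (k+4)) + 1 := by
        have h6 : fibF (k+4+2) - 1 + 1 = fibF (k+6) := by
          have : fibF (k+4+2) = fibF (k+6) := by norm_num
          omega
        have h4' : fibF (k+4) - 1 + 1 = fibF (k+4) := by omega
        rw [h6, h4'] at e1; exact e1
      have e0' : a (fibF (k+6) - 1) = a (fibF (k+4) - 1) + 1 := by
        have h6 : fibF (k+4+2) - 1 + 0 = fibF (k+6) - 1 := by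
          have : fibF (k+4+2) = fibF (k+6) := by norm_num
          omega
        rw [h6] at e0; simpa using e0
      have ia' : a (fibF (k+4) - 1) = (k+3)/2 := by
        have : fibF (k+2+2) = fibF (k+4) := by norm_num
        rw [this] at ia; convert ia using 2 <;> omega
      have ib' : a (fibF (k+4)) = (k+4)/2 := by
        have : fibF (k+2+2) = fibF (k+4) := by norm_num
        rw [this] at ib; convert ib using 2 <;> omega
      have g6 : fibF (k+4+2) = fibF (k+6) := by norm_num
      rw [g6]
      refine ⟨?_, ?_, ?_⟩
      · rw [e0', ia']; omega
      · rw [e1', ib']; omega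
      · rw [e0', e1', ia', ib']; omega
end

section
/- Let the kernel numbers be k_0 = 0, k_1 = k_2 = 1, k_m = k_{m−1} + k_{m−2} + k_{m−3} − 1 for m ≥ 3, and let t be the Tribonacci numbers t_{−2}=0, t_{−1}=t_0=1, t_m = t_{m−1}+t_{m−2}+t_{m−3} for m ≥ 1. Then for all m ≥ 3, k_m = k_{m−3} + t_{m−4} and k_m = (t_{m−3} + t_{m−5} + 1)/2. -/
/-- Tribonacci numbers shifted: `trib (m+2) = t_m` where `t_{-2}=0`, `t_{-1}=t_0=1`,
`t_m = t_{m-1} + t_{m-2} + t_{m-3}`. -/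
def trib : ℕ → ℕ
  | 0 => 0
  | 1 => 1
  | 2 => 1
  | n + 3 => trib (n + 2) + trib (n + 1) + trib n

/-- Kernel numbers: `k_0 = 0`, `k_1 = k_2 = 1`, `k_m = k_{m-1}+k_{m-2}+k_{m-3}-1`. -/
def ker : ℕ → ℕ
  | 0 => 0
  | 1 => 1
  | 2 => 1
  | n + 3 => ker (n + 2) + ker (n + 1) + ker n - 1

/-- For all `m ≥ 3`, `k_m = k_{m-3} + t_{m-4}` and `k_m = (t_{m-3} + t_{m-5} + 1)/2`
(with `t_i = trib (i+2)`). -/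
theorem ker_eq (m : ℕ) (hm : 3 ≤ m) :
    ker m = ker (m - 3) + trib (m - 2) ∧
    ker m = (trib (m - 1) + trib (m - 3) + 1) / 2 := by
  have key : ∀ n, (ker (n+3) = ker n + trib (n+1) ∧ 2 * ker (n+3) = trib (n+2) + trib n + 1) ∧
      (ker (n+4) = ker (n+1) + trib (n+2) ∧ 2 * ker (n+4) = trib (n+3) + trib (n+1) + 1) ∧
      (ker (n+5) = ker (n+2) + trib (n+3) ∧ 2 * ker (n+5) = trib (n+4) + trib (n+2) + 1) := by
    intro n
    induction n with
    | zero => simp [ker, trib]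
    | succ k ih =>
      obtain ⟨h0, h1, h2⟩ := ih
      refine ⟨h1, h2, show ker (k+6) = ker (k+3) + trib (k+4) ∧
        2 * ker (k+6) = trib (k+5) + trib (k+3) + 1 from ?_⟩
      have hk : ker (k+6) = ker (k+5) + ker (k+4) + ker (k+3) - 1 := rfl
      have ht : trib (k+6) = trib (k+5) + trib (k+4) + trib (k+3) := rfl
      have ht3 : trib (k+3) = trib (k+2) + trib (k+1) + trib k := rfl
      have ht4 : trib (k+4) = trib (k+3) + trib (k+2) + trib (k+1) := rfl
      have ht5 : trib (k+5) = trib (k+4) + trib (k+3) + trib (k+2) := rfl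
      omega
  obtain ⟨n, rfl⟩ : ∃ n, m = n + 3 := ⟨m - 3, by omega⟩
  obtain ⟨⟨h1, h2⟩, -⟩ := key n
  simp only [Nat.add_sub_cancel, show n+3-2 = n+1 from rfl, show n+3-1 = n+2 from rfl]
  exact ⟨h1, by omega⟩
end

section
/- With kernel numbers k_0=0, k_1=k_2=1, k_m = k_{m−1}+k_{m−2}+k_{m−3}−1 (m ≥ 3) and Tribonacci numbers t_{−2}=0, t_{−1}=t_0=1, t_m=t_{m−1}+t_{m−2}+t_{m−3} (m ≥ 1), we have ∑_{i=1}^{m} k_i = (k_m + k_{m+2} + m − 1)/2 = (t_{m−2} + t_{m−3} + m)/2 for all m ≥ 1. -/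
lemma ker_pos : ∀ n, 1 ≤ ker (n + 1) := by
  have h : ∀ n, 1 ≤ ker (n + 1) ∧ 1 ≤ ker (n + 2) := by
    intro n
    induction n with
    | zero => exact ⟨le_refl 1, le_refl 1⟩
    | succ k ih =>
      refine ⟨ih.2, ?_⟩
      show 1 ≤ ker (k + 3)
      simp only [ker]
      omega
  exact fun n => (h n).1

lemma ker_rec (n : ℕ) : ker (n + 3) + 1 = ker (n + 2) + ker (n + 1) + ker n := by
  have := ker_pos n
  simp only [ker]
  omega

lemma ker_trib : ∀ n, (ker (n + 1) + ker (n + 3) = trib (n + 1) + trib n + 1) ∧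
    (ker (n + 2) + ker (n + 4) = trib (n + 2) + trib (n + 1) + 1) ∧
    (ker (n + 3) + ker (n + 5) = trib (n + 3) + trib (n + 2) + 1) := by
  intro n
  induction n with
  | zero =>
    refine ⟨by decide, by decide, ?_⟩
    show ker 3 + ker 5 = trib 3 + trib 2 + 1
    decide
  | succ k ih =>
    refine ⟨ih.2.1, ih.2.2, ?_⟩
    have r1 : ker (k + 4) + 1 = ker (k + 3) + ker (k + 2) + ker (k + 1) := ker_rec (k + 1)
    have r2 : ker (k + 6) + 1 = ker (k + 5) + ker (k + 4) + ker (k + 3) := ker_rec (k + 3)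
    have t1 : trib (k + 4) = trib (k + 3) + trib (k + 2) + trib (k + 1) := rfl
    have t2 : trib (k + 3) = trib (k + 2) + trib (k + 1) + trib k := rfl
    have := ih.1; have := ih.2.1; have := ih.2.2
    show ker (k + 4) + ker (k + 6) = trib (k + 4) + trib (k + 3) + 1
    have r3 : ker (k + 5) + 1 = ker (k + 4) + ker (k + 3) + ker (k + 2) := ker_rec (k + 2)
    omega

lemma sum_ker : ∀ k, 2 * (∑ i ∈ Finset.Icc 1 (k + 1), ker i) + 1
    = ker (k + 1) + ker (k + 3) + (k + 1) := by
  intro k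
  induction k with
  | zero => decide
  | succ n ih =>
    rw [show n + 1 + 1 = (n + 1) + 1 from rfl,
      Finset.sum_Icc_succ_top (by omega : 1 ≤ n + 1 + 1)]
    have r1 : ker (n + 4) + 1 = ker (n + 3) + ker (n + 2) + ker (n + 1) := ker_rec (n + 1)
    have := ker_pos (n + 1)
    show 2 * ((∑ i ∈ Finset.Icc 1 (n + 1), ker i) + ker (n + 2)) + 1
        = ker (n + 2) + ker (n + 4) + (n + 2)
    omega

/-- For all `m ≥ 1`, `∑_{i=1}^{m} k_i = (k_m + k_{m+2} + m - 1)/2 = (t_{m-2} + t_{m-3} + m)/2`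
(with `t_i = trib (i+2)`). -/
theorem sum_ker_eq (m : ℕ) (hm : 1 ≤ m) :
    (∑ i ∈ Finset.Icc 1 m, ker i) = (ker m + ker (m + 2) + m - 1) / 2 ∧
    (∑ i ∈ Finset.Icc 1 m, ker i) = (trib m + trib (m - 1) + m) / 2 := by
  obtain ⟨k, rfl⟩ := Nat.exists_eq_add_of_le hm
  have h1 := sum_ker k
  have h2 := (ker_trib k).1
  simp only [Nat.add_comm 1 k, Nat.add_sub_cancel,
    show k + 1 + 2 = k + 3 from rfl]
  omega
end

section
/- Define D(m) = ∑_{i=−1}^{m−2} t_i t_{m−i−2} for m ≥ 1, where t are the Tribonacci numbers with t_{−2}=0, t_{−1}=t_0=1. Then D(m) = (m/22)(3t_m + 7t_{m−1} + 2t_{m−2}) + (1/22)(3t_m − 3t_{m−1} + 4t_{m−2}) for all m ≥ 1. -/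
/-- `D m = ∑_{i=-1}^{m-2} t_i t_{m-i-2}` (with `t_i = trib (i+2)`). -/
def D (m : ℕ) : ℚ :=
  ∑ j ∈ Finset.range m, (trib (j + 1) : ℚ) * (trib (m - j + 1) : ℚ)

lemma D_peel (m : ℕ) : D (m + 3) =
    (∑ j ∈ Finset.range m, (trib (j + 1) : ℚ) * (trib (m + 3 - j + 1) : ℚ))
      + trib (m + 1) * trib 4 + trib (m + 2) * trib 3 + trib (m + 3) * trib 2 := by
  unfold D
  rw [Finset.sum_range_succ, Finset.sum_range_succ, Finset.sum_range_succ]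
  have h1 : m + 3 - m + 1 = 4 := by omega
  have h2 : m + 3 - (m + 1) + 1 = 3 := by omega
  have h3 : m + 3 - (m + 2) + 1 = 2 := by omega
  rw [h1, h2, h3]

lemma Drec (m : ℕ) : D (m + 3) = D (m + 2) + D (m + 1) + D m + trib (m + 4) := by
  have e2 : D (m + 2) =
      (∑ j ∈ Finset.range m, (trib (j + 1) : ℚ) * (trib (m + 2 - j + 1) : ℚ))
        + trib (m + 1) * trib 3 + trib (m + 2) * trib 2 := by
    unfold D
    rw [Finset.sum_range_succ, Finset.sum_range_succ]
    have h1 : m + 2 - m + 1 = 3 := by omega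
    have h2 : m + 2 - (m + 1) + 1 = 2 := by omega
    rw [h1, h2]
  have e1 : D (m + 1) =
      (∑ j ∈ Finset.range m, (trib (j + 1) : ℚ) * (trib (m + 1 - j + 1) : ℚ))
        + trib (m + 1) * trib 2 := by
    unfold D
    rw [Finset.sum_range_succ]
    have h1 : m + 1 - m + 1 = 2 := by omega
    rw [h1]
  have key : ∑ j ∈ Finset.range m, (trib (j + 1) : ℚ) * (trib (m + 3 - j + 1) : ℚ) =
      ∑ j ∈ Finset.range m, ((trib (j + 1) : ℚ) * (trib (m + 2 - j + 1) : ℚ)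
        + (trib (j + 1) : ℚ) * (trib (m + 1 - j + 1) : ℚ)
        + (trib (j + 1) : ℚ) * (trib (m - j + 1) : ℚ)) := by
    refine Finset.sum_congr rfl fun j hj => ?_
    simp only [Finset.mem_range] at hj
    have h3 : m + 3 - j + 1 = (m - j + 1) + 3 := by omega
    have h2 : m + 2 - j + 1 = (m - j + 1) + 2 := by omega
    have h1 : m + 1 - j + 1 = (m - j + 1) + 1 := by omega
    rw [h3, h2, h1, trib]
    push_cast
    ring
  rw [D_peel, key, Finset.sum_add_distrib, Finset.sum_add_distrib, e2, e1]
  show _ = _ + _ + D m + ((trib (m + 3) + trib (m + 2) + trib (m + 1) : ℕ) : ℚ)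
  unfold D
  have t2 : trib 2 = 1 := rfl
  have t3 : trib 3 = 2 := rfl
  have t4 : trib 4 = 4 := rfl
  rw [t2, t3, t4]
  push_cast
  ring

lemma trib_rec (n : ℕ) : (trib (n + 3) : ℚ) = trib (n + 2) + trib (n + 1) + trib n := by
  rw [trib]; push_cast; ring

/-- For all `m ≥ 1`,
`D m = (m/22)(3 t_m + 7 t_{m-1} + 2 t_{m-2}) + (1/22)(3 t_m - 3 t_{m-1} + 4 t_{m-2})`. -/
theorem D_closed_form (m : ℕ) (hm : 1 ≤ m) :
    D m = ((m : ℚ) / 22) *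
        (3 * (trib (m + 2) : ℚ) + 7 * (trib (m + 1) : ℚ) + 2 * (trib m : ℚ)) +
      (1 / 22) *
        (3 * (trib (m + 2) : ℚ) - 3 * (trib (m + 1) : ℚ) + 4 * (trib m : ℚ)) := by
  induction m using Nat.strong_induction_on with
  | _ m ih =>
    match m, hm with
    | 1, _ => norm_num [D, Finset.sum_range_succ, trib]
    | 2, _ => norm_num [D, Finset.sum_range_succ, trib]
    | 3, _ =>
      show D 3 = _
      norm_num [D, Finset.sum_range_succ]
      norm_num [trib]
    | (k + 4), _ =>
      have h3 := ih (k + 3) (by omega) (by omega)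
      have h2 := ih (k + 2) (by omega) (by omega)
      have h1 := ih (k + 1) (by omega) (by omega)
      have hr := Drec (k + 1)
      have r4 : (trib (k + 4) : ℚ) = trib (k + 3) + trib (k + 2) + trib (k + 1) := trib_rec (k + 1)
      have r5 : (trib (k + 5) : ℚ) = trib (k + 4) + trib (k + 3) + trib (k + 2) := trib_rec (k + 2)
      have r6 : (trib (k + 6) : ℚ) = trib (k + 5) + trib (k + 4) + trib (k + 3) := trib_rec (k + 3)
      simp only [show k + 3 + 2 = k + 5 by omega, show k + 3 + 1 = k + 4 by omega,
        show k + 2 + 2 = k + 4 by omega, show k + 2 + 1 = k + 3 by omega,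
        show k + 1 + 2 = k + 3 by omega, show k + 1 + 1 = k + 2 by omega,
        show k + 1 + 4 = k + 5 by omega, show k + 1 + 3 = k + 4 by omega,
        show k + 4 + 2 = k + 6 by omega, show k + 4 + 1 = k + 5 by omega] at hr h3 h2 h1 ⊢
      rw [hr, h3, h2, h1, r6, r5, r4]
      push_cast
      ring
end

section
/- For Tribonacci numbers t with t_{−2}=0, t_{−1}=t_0=1, ∑_{i=0}^{m} (i+1) t_i = (m/2)(t_{m+2} + t_m) − (1/2)(t_{m−1} + t_{m−2}) + 3/2 for all m ≥ 0. -/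
/-- For all `m ≥ 0`,
`∑_{i=0}^{m} (i+1) t_i = (m/2)(t_{m+2} + t_m) - (1/2)(t_{m-1} + t_{m-2}) + 3/2`
(with `t_i = trib (i+2)`). -/
theorem sum_weighted_trib (m : ℕ) :
    (∑ i ∈ Finset.range (m + 1), ((i : ℚ) + 1) * (trib (i + 2) : ℚ)) =
      ((m : ℚ) / 2) * ((trib (m + 4) : ℚ) + (trib (m + 2) : ℚ)) -
        (1 / 2) * ((trib (m + 1) : ℚ) + (trib m : ℚ)) + 3 / 2 := by
  induction m with
  | zero => norm_num [trib]
  | succ n ih =>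
    rw [Finset.sum_range_succ, ih]
    have h3 : trib (n + 3) = trib (n + 2) + trib (n + 1) + trib n := rfl
    have h4 : trib (n + 4) = trib (n + 3) + trib (n + 2) + trib (n + 1) := rfl
    have h5 : trib (n + 5) = trib (n + 4) + trib (n + 3) + trib (n + 2) := rfl
    push_cast [h5, h4, h3]
    ring
end

section
/- In the Fibonacci word F (fixed point of σ(a)=ab, σ(b)=a beginning with a), the number of occurrences of the letter a in the prefix F[1,p−1] equals ⌊φp⌋, where φ = (√5 − 1)/2. -/
lemma sqrt5_sq : Real.sqrt 5 ^ 2 = 5 := Real.sq_sqrt (by norm_num)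
lemma sqrt5_gt : (2.236 : ℝ) < Real.sqrt 5 := by
  nlinarith [sqrt5_sq, Real.sqrt_nonneg 5]
lemma sqrt5_lt : Real.sqrt 5 < 2.237 := by
  nlinarith [sqrt5_sq, Real.sqrt_nonneg 5]
lemma phi_pos : 0 < phi := by unfold phi; nlinarith [sqrt5_gt]
lemma phi_lt_one : phi < 1 := by unfold phi; nlinarith [sqrt5_lt]
lemma phi_sq : phi ^ 2 = 1 - phi := by
  unfold phi; nlinarith [sqrt5_sq]

lemma fib_phi : ∀ n : ℕ, (Nat.fib (n+1) : ℝ) * phi = Nat.fib n - (-phi)^(n+1) := by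
  intro n
  induction n using Nat.twoStepInduction with
  | zero => simp
  | one => simp [Nat.fib]; nlinarith [phi_sq]
  | more n ih1 ih2 =>
    have h : (Nat.fib (n+3) : ℝ) = Nat.fib (n+2) + Nat.fib (n+1) := by
      push_cast [Nat.fib_add_two]; ring
    rw [h, add_mul, ih1, ih2]
    push_cast [Nat.fib_add_two]
    have : (-phi)^(n+3) = (-phi)^(n+1) * (phi^2) := by ring
    rw [this, phi_sq]
    ring_nf

lemma phi_pow_pos (n : ℕ) : 0 < phi ^ n := pow_pos phi_pos n
lemma phi_pow_le (m n : ℕ) (h : m ≤ n) : phi ^ n ≤ phi ^ m :=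
  pow_le_pow_of_le_one phi_pos.le phi_lt_one.le h
lemma abs_negphi_pow (n : ℕ) : |(-phi)^n| = phi^n := by
  rw [abs_pow, abs_neg, abs_of_pos phi_pos]
lemma phi_sq_small : phi^2 < 1/2 := by nlinarith [phi_sq, phi_pos, phi_lt_one, sqrt5_lt]

lemma best : ∀ m : ℕ, ∀ k : ℕ, ∀ z : ℤ, 1 ≤ k → k ≤ Nat.fib (m+2) →
    phi^(m+2) ≤ |(k:ℝ) * phi - z| := by
  intro m
  induction m using Nat.twoStepInduction with
  | zero =>
    intro k z hk1 hk2
    have : k = 1 := by simpa [Nat.fib] using Nat.le_antisymm hk2 hk1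
    subst this
    have hz : (z:ℝ) ≤ 0 ∨ 1 ≤ (z:ℝ) := by
      rcases (by omega : z ≤ 0 ∨ 1 ≤ z) with h | h
      · left; exact_mod_cast h
      · right; exact_mod_cast h
    rcases hz with h | h
    · rw [le_abs]; left; push_cast; nlinarith [phi_sq, phi_pos, phi_lt_one]
    · rw [le_abs]; right; push_cast; nlinarith [phi_sq, phi_pos, phi_lt_one]
  | one =>
    intro k z hk1 hk2
    have h3 : phi^3 = 2*phi - 1 := by linear_combination (phi - 1) * phi_sq
    have hk : k = 1 ∨ k = 2 := by
      have : Nat.fib (1+2) = 2 := rfl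
      omega
    rcases hk with rfl | rfl
    · have hz : (z:ℝ) ≤ 0 ∨ 1 ≤ (z:ℝ) := by
        rcases (by omega : z ≤ 0 ∨ 1 ≤ z) with h | h
        · left; exact_mod_cast h
        · right; exact_mod_cast h
      rcases hz with h | h
      · rw [le_abs]; left; push_cast; nlinarith [phi_sq, phi_pos, phi_lt_one]
      · rw [le_abs]; right; push_cast; nlinarith [phi_sq, phi_pos, phi_lt_one]
    · have hz : (z:ℝ) ≤ 1 ∨ 2 ≤ (z:ℝ) := by
        rcases (by omega : z ≤ 1 ∨ 2 ≤ z) with h | h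
        · left; exact_mod_cast h
        · right; exact_mod_cast h
      rcases hz with h | h
      · rw [le_abs]; left; push_cast; nlinarith [phi_pos, phi_lt_one]
      · rw [le_abs]; right; push_cast; nlinarith [phi_pos, phi_lt_one, phi_sq]
  | more m ih1 ih2 =>
    intro k z hk1 hk2
    have hk2' : k ≤ Nat.fib (m+4) := hk2
    show phi^(m+4) ≤ _
    by_cases hk : k ≤ Nat.fib (m+3)
    · exact le_trans (phi_pow_le (m+3) (m+4) (by omega)) (ih2 k z hk1 hk)
    · push_neg at hk
      set j : ℕ := Nat.fib (m+4) - k with hj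
      have hfib : Nat.fib (m+4) = Nat.fib (m+3) + Nat.fib (m+2) := by
        rw [Nat.fib_add_two]; ring
      have hjlt : j < Nat.fib (m+2) := by omega
      have hkr : (k : ℝ) = Nat.fib (m+4) - j := by
        have h : k = Nat.fib (m+4) - j := by omega
        rw [h, Nat.cast_sub (by omega)]
      set z' : ℤ := Nat.fib (m+3) - z with hz'
      have key : (k:ℝ) * phi - z = -(((j:ℝ) * phi + (-phi)^(m+4)) - z') := by
        rw [hkr]
        have hf := fib_phi (m+3)
        push_cast [hz']
        nlinarith [hf]
      rw [key, abs_neg]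
      by_cases hj0 : j = 0
      · rw [hj0]
        push_cast
        by_cases hz0 : z' = 0
        · rw [hz0]
          push_cast
          simp only [zero_mul, zero_add, sub_zero, abs_negphi_pow]
          exact le_refl _
        · have h1z : (1:ℝ) ≤ |(z' : ℝ)| := by
            rw [← Int.cast_abs]; exact_mod_cast Int.one_le_abs hz0
          have habs := abs_negphi_pow (m+4)
          have h1 : phi^(m+4) ≤ phi^2 := phi_pow_le 2 (m+4) (by omega)
          have h3 := abs_sub_abs_le_abs_sub ((z':ℝ)) ((-phi)^(m+4))
          calc phi^(m+4) ≤ phi^2 := h1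
            _ ≤ 1 - phi^2 := by nlinarith [phi_sq_small]
            _ ≤ |(z':ℝ)| - |(-phi)^(m+4)| := by rw [habs]; linarith
            _ ≤ |(z':ℝ) - (-phi)^(m+4)| := h3
            _ = |(0:ℝ)*phi + (-phi)^(m+4) - (z':ℝ)| := by
                rw [abs_sub_comm]; ring_nf
      · have hj1 : 1 ≤ j := by omega
        have hbest := ih1 j z' hj1 (by omega)
        have habs := abs_negphi_pow (m+4)
        have htri : |(j:ℝ)*phi - z'| ≤ |(j:ℝ)*phi + (-phi)^(m+4) - z'| + phi^(m+4) := by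
          have := abs_add_le ((j:ℝ)*phi + (-phi)^(m+4) - z') (-(-phi)^(m+4))
          rw [abs_neg, habs] at this
          calc |(j:ℝ)*phi - z'| = |((j:ℝ)*phi + (-phi)^(m+4) - z') + -(-phi)^(m+4)| := by
                ring_nf
            _ ≤ _ := this
        have hstep : phi^(m+3) = phi^(m+2) - phi^(m+4) := by
          have : phi^(m+4) = phi^(m+2) * phi^2 := by ring
          rw [this, phi_sq]; ring
        have : phi^(m+3) ≤ |(j:ℝ)*phi + (-phi)^(m+4) - z'| := by
          rw [hstep]; linarith
        linarith [phi_pow_le (m+3) (m+4) (by omega), this,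
          sub_nonneg.mpr (phi_pow_le (m+3) (m+4) (by omega : m+3 ≤ m+4))]

lemma bestStrict : ∀ m : ℕ, ∀ k : ℕ, ∀ z : ℤ, 1 ≤ k → k < Nat.fib (m+3) →
    phi^(m+3) < |(k:ℝ) * phi - z| := by
  intro m k z hk1 hk2
  have hdec : ∀ n : ℕ, phi^(n+1) < phi^n := fun n =>
    pow_lt_pow_right_of_lt_one₀ phi_pos phi_lt_one (by omega)
  by_cases hk : k ≤ Nat.fib (m+2)
  · exact lt_of_lt_of_le (hdec (m+2)) (best m k z hk1 hk)
  · push_neg at hk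
    match m, hk, hk2 with
    | 0, hk, hk2 =>
      exfalso
      have h2 : Nat.fib (0+2) = 1 := rfl
      have h3 : Nat.fib (0+3) = 2 := rfl
      omega
    | (m+1), hk, hk2 =>
      set j : ℕ := Nat.fib (m+4) - k with hj
      have hfib : Nat.fib (m+4) = Nat.fib (m+3) + Nat.fib (m+2) := by
        rw [Nat.fib_add_two]; ring
      have hk2' : k < Nat.fib (m+4) := hk2
      have hk' : Nat.fib (m+3) < k := hk
      have hj1 : 1 ≤ j := by omega
      have hjle : j ≤ Nat.fib (m+2) := by omega
      have hkr : (k : ℝ) = Nat.fib (m+4) - j := by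
        have h : k = Nat.fib (m+4) - j := by omega
        rw [h, Nat.cast_sub (by omega)]
      set z' : ℤ := Nat.fib (m+3) - z with hz'
      have key : (k:ℝ) * phi - z = -(((j:ℝ) * phi + (-phi)^(m+4)) - z') := by
        rw [hkr]
        have hf := fib_phi (m+3)
        push_cast [hz']
        nlinarith [hf]
      rw [key, abs_neg]
      have hbest := best m j z' hj1 hjle
      have habs := abs_negphi_pow (m+4)
      have htri : |(j:ℝ)*phi - z'| ≤ |(j:ℝ)*phi + (-phi)^(m+4) - z'| + phi^(m+4) := by
        have h := abs_add_le ((j:ℝ)*phi + (-phi)^(m+4) - z') (-(-phi)^(m+4))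
        rw [abs_neg, habs] at h
        calc |(j:ℝ)*phi - z'| = |((j:ℝ)*phi + (-phi)^(m+4) - z') + -(-phi)^(m+4)| := by
              ring_nf
          _ ≤ _ := h
      have hstep : phi^(m+3) = phi^(m+2) - phi^(m+4) := by
        have h : phi^(m+4) = phi^(m+2) * phi^2 := by ring
        rw [h, phi_sq]; ring
      have hlt : phi^(m+1+3) < phi^(m+3) := hdec (m+3)
      have : phi^(m+3) ≤ |(j:ℝ)*phi + (-phi)^(m+4) - z'| := by
        rw [hstep]; linarith
      linarith

lemma B_shift (m k : ℕ) (hk1 : 1 ≤ k) (hk2 : k < Nat.fib (m+3)) :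
    ⌊((Nat.fib (m+3) + k : ℕ) : ℝ) * phi⌋ = Nat.fib (m+2) + ⌊(k:ℝ) * phi⌋ := by
  have hf := fib_phi (m+2)
  have heq : ((Nat.fib (m+3) + k : ℕ) : ℝ) * phi
      = ((Nat.fib (m+2) : ℤ) : ℝ) + ((k:ℝ) * phi + -(-phi)^(m+3)) := by
    push_cast
    nlinarith [hf]
  rw [heq, Int.floor_intCast_add]
  congr 1
  have h1 := bestStrict m k ⌊(k:ℝ)*phi⌋ hk1 hk2
  have h2 := bestStrict m k (⌊(k:ℝ)*phi⌋ + 1) hk1 hk2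
  have hfl := Int.floor_le ((k:ℝ)*phi)
  have hfu := Int.lt_floor_add_one ((k:ℝ)*phi)
  have habs := abs_negphi_pow (m+3)
  have hb : |(-phi)^(m+3)| ≤ phi^(m+3) := le_of_eq habs
  have hd1 : phi^(m+3) < (k:ℝ)*phi - ⌊(k:ℝ)*phi⌋ := by
    rwa [abs_of_nonneg (by linarith)] at h1
  have hd2 : phi^(m+3) < (⌊(k:ℝ)*phi⌋:ℝ) + 1 - (k:ℝ)*phi := by
    rw [abs_sub_comm] at h2
    push_cast at h2 ⊢
    rwa [abs_of_nonneg (by push_cast; linarith)] at h2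
  rw [Int.floor_eq_iff]
  constructor
  · have h := le_abs_self ((-phi)^(m+3))
    rw [habs] at h
    linarith
  · have h := neg_le_abs ((-phi)^(m+3))
    rw [habs] at h
    push_cast
    linarith

noncomputable def B (n : ℕ) : ℤ := ⌊(n : ℝ) * phi⌋

noncomputable def T (n : ℕ) : Fin 2 := if B (n+2) = B (n+1) + 1 then 0 else 1

lemma B_eq (n : ℕ) (v : ℤ) (h1 : (v:ℝ) ≤ (n:ℝ) * phi) (h2 : (n:ℝ) * phi < v + 1) :
    B n = v := Int.floor_eq_iff.mpr ⟨h1, h2⟩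

lemma B1 : B 1 = 0 := B_eq 1 0 (by unfold phi; push_cast; nlinarith [sqrt5_gt])
  (by unfold phi; push_cast; nlinarith [sqrt5_lt])
lemma B2 : B 2 = 1 := B_eq 2 1 (by unfold phi; push_cast; nlinarith [sqrt5_gt])
  (by unfold phi; push_cast; nlinarith [sqrt5_lt])
lemma B3 : B 3 = 1 := B_eq 3 1 (by unfold phi; push_cast; nlinarith [sqrt5_gt])
  (by unfold phi; push_cast; nlinarith [sqrt5_lt])
lemma B4 : B 4 = 2 := B_eq 4 2 (by unfold phi; push_cast; nlinarith [sqrt5_gt])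
  (by unfold phi; push_cast; nlinarith [sqrt5_lt])
lemma B5 : B 5 = 3 := B_eq 5 3 (by unfold phi; push_cast; nlinarith [sqrt5_gt])
  (by unfold phi; push_cast; nlinarith [sqrt5_lt])
lemma B6 : B 6 = 3 := B_eq 6 3 (by unfold phi; push_cast; nlinarith [sqrt5_gt])
  (by unfold phi; push_cast; nlinarith [sqrt5_lt])

lemma T0 : T 0 = 0 := by simp [T, B1, B2]
lemma T1 : T 1 = 1 := by simp [T, B2, B3]
lemma T2 : T 2 = 0 := by simp [T, B3, B4]
lemma T3 : T 3 = 0 := by simp [T, B4, B5]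
lemma T4 : T 4 = 1 := by simp [T, B5, B6]

lemma fibList_rec (m : ℕ) : fibList (m+2) = fibList (m+1) ++ fibList m := by
  induction m with
  | zero => decide
  | succ n ih =>
    rw [show fibList (n+3) = (fibList (n+1) ++ fibList n).flatMap fibSub from by
      rw [← ih]; rfl, List.flatMap_append]
    rfl

lemma fibList_length (m : ℕ) : (fibList m).length = Nat.fib (m+2) := by
  induction m using Nat.twoStepInduction with
  | zero => decide
  | one => decide
  | more n ih1 ih2 =>
    rw [fibList_rec, List.length_append, ih1, ih2]
    have h : Nat.fib (n+2+2) = Nat.fib (n+2) + Nat.fib (n+2+1) := Nat.fib_add_two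
    have e : Nat.fib (n+1+2) = Nat.fib (n+2+1) := rfl
    omega

lemma B_shift' (m k : ℕ) (hk1 : 1 ≤ k) (hk2 : k < Nat.fib (m+3)) :
    B (Nat.fib (m+3) + k) = Nat.fib (m+2) + B k := B_shift m k hk1 hk2

lemma T_shift (m j : ℕ) (hj : j < Nat.fib (m+4)) : T (Nat.fib (m+5) + j) = T j := by
  have h2 : 2 ≤ Nat.fib (m+3) := by
    have h := Nat.fib_mono (show 3 ≤ m+3 by omega)
    simpa [show Nat.fib 3 = 2 from rfl] using h
  have hf : Nat.fib (m+5) = Nat.fib (m+3) + Nat.fib (m+4) :=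
    Nat.fib_add_two (n := m+3)
  have e1 : B (Nat.fib (m+5) + j + 1) = Nat.fib (m+4) + B (j+1) := by
    have h := B_shift' (m+2) (j+1) (by omega) (by
      show j + 1 < Nat.fib (m+5); omega)
    rw [show Nat.fib (m+5) + j + 1 = Nat.fib (m+2+3) + (j+1) from rfl]
    exact h
  have e2 : B (Nat.fib (m+5) + j + 2) = Nat.fib (m+4) + B (j+2) := by
    have h := B_shift' (m+2) (j+2) (by omega) (by
      show j + 2 < Nat.fib (m+5); omega)
    rw [show Nat.fib (m+5) + j + 2 = Nat.fib (m+2+3) + (j+2) from rfl]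
    exact h
  unfold T
  rw [e1, e2]
  exact if_congr (by omega) rfl rfl

lemma W0 : fibList 0 = (List.range (Nat.fib 2)).map T := by
  show fibList 0 = (List.range 1).map T
  simp [fibList, List.range_succ, T0]

lemma W1 : fibList 1 = (List.range (Nat.fib 3)).map T := by
  show fibList 1 = (List.range 2).map T
  have h : fibList 1 = [0, 1] := by decide
  simp [h, List.range_succ, T0, T1]

lemma W2 : fibList 2 = (List.range (Nat.fib 4)).map T := by
  show fibList 2 = (List.range 3).map T
  have h : fibList 2 = [0, 1, 0] := by decide
  simp [h, List.range_succ, T0, T1, T2]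

lemma W3 : fibList 3 = (List.range (Nat.fib 5)).map T := by
  show fibList 3 = (List.range 5).map T
  have h : fibList 3 = [0, 1, 0, 0, 1] := by decide
  simp [h, List.range_succ, T0, T1, T2, T3, T4]

lemma Wkey : ∀ m : ℕ, fibList (m+2) = (List.range (Nat.fib (m+4))).map T ∧
    fibList (m+3) = (List.range (Nat.fib (m+5))).map T := by
  intro m
  induction m with
  | zero => exact ⟨W2, W3⟩
  | succ n ih =>
    refine ⟨ih.2, ?_⟩
    show fibList (n+4) = (List.range (Nat.fib (n+6))).map T
    have hfib : Nat.fib (n+6) = Nat.fib (n+5) + Nat.fib (n+4) := by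
      have h : Nat.fib (n+4+2) = Nat.fib (n+4) + Nat.fib (n+4+1) := Nat.fib_add_two
      have e1 : Nat.fib (n+4+2) = Nat.fib (n+6) := rfl
      have e2 : Nat.fib (n+4+1) = Nat.fib (n+5) := rfl
      omega
    have hrec : fibList (n+4) = fibList (n+3) ++ fibList (n+2) := fibList_rec (n+2)
    rw [hrec, ih.1, ih.2, hfib, List.range_add, List.map_append, List.map_map]
    congr 1
    apply List.map_congr_left
    intro j hj
    exact (T_shift n j (List.mem_range.mp hj)).symm

lemma Wlemma (m : ℕ) : fibList m = (List.range (Nat.fib (m+2))).map T := by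
  match m with
  | 0 => exact W0
  | 1 => exact W1
  | (n+2) => exact (Wkey n).1

lemma fib_ge (i : ℕ) : i + 2 ≤ Nat.fib (i+3) := by
  induction i with
  | zero => decide
  | succ n ih =>
    have h : Nat.fib (n+1+3) = Nat.fib (n+2) + Nat.fib (n+3) := Nat.fib_add_two (n := n+2)
    have hp : 0 < Nat.fib (n+2) := Nat.fib_pos.mpr (by omega)
    omega

lemma fibWord_eq (i : ℕ) : fibWord i = T i := by
  unfold fibWord
  rw [Wlemma (i+1)]
  have hlen : i < ((List.range (Nat.fib (i+3))).map T).length := by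
    simp only [List.length_map, List.length_range]
    have := fib_ge i
    omega
  rw [List.getD_eq_getElem _ _ hlen]
  simp

lemma Bmono (n : ℕ) : B (n+1) ≤ B (n+2) ∧ B (n+2) ≤ B (n+1) + 1 := by
  unfold B
  constructor
  · apply Int.floor_le_floor
    push_cast
    nlinarith [phi_pos]
  · have h1 : ((n+2:ℕ):ℝ) * phi ≤ ((n+1:ℕ):ℝ) * phi + 1 := by
      push_cast; nlinarith [phi_lt_one, phi_pos]
    have h2 := Int.floor_le_floor h1
    rwa [Int.floor_add_one] at h2

lemma count_T (n : ℕ) : ((((List.range n).map T).count 0 : ℕ) : ℤ) = B (n+1) := by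
  induction n with
  | zero => simpa using B1.symm
  | succ n ih =>
    rw [List.range_succ, List.map_append, List.count_append]
    have hB := Bmono n
    by_cases h : B (n+2) = B (n+1) + 1
    · have hT : T n = 0 := by simp [T, h]
      rw [show B (n+1+1) = B (n+1) + 1 from h]
      simp only [List.map_cons, List.map_nil, hT]
      push_cast
      rw [ih]
      simp
    · have hT : T n = 1 := by simp [T, h]
      have hE : B (n+1+1) = B (n+1) := by
        have e : B (n+1+1) = B (n+2) := rfl
        omega
      rw [hE]
      simp only [List.map_cons, List.map_nil, hT]
      push_cast
      rw [ih]
      norm_num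

/-- The number of occurrences of `a = 0` in the prefix `F[1,p-1]` of the Fibonacci word
equals `⌊φ p⌋`. -/
theorem count_a_in_prefix (p : ℕ) (hp : 1 ≤ p) :
    ((fibPrefix (p - 1)).count 0 : ℤ) = ⌊phi * (p : ℝ)⌋ := by
  have hpre : fibPrefix (p-1) = (List.range (p-1)).map T := by
    unfold fibPrefix
    exact List.map_congr_left (fun i _ => fibWord_eq i)
  rw [hpre, count_T]
  rw [show p - 1 + 1 = p from Nat.succ_pred_eq_of_pos hp]
  unfold B
  rw [mul_comm]
end
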